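/- arXiv:1002.0519 — 4 statements merged into one kernel-verified Lean document; each statement's English description precedes it below -/
import Mathlib

section
/- Let x = a + b·i ∈ ℂ with a and b both irrational, and suppose a and b are rationally independent, i.e., there exist no rational numbers r, s with a = r + s·b. Then OC(x+Γ) = {id}. -/
open Pointwise Complex ComplexConjugate

/-- The square lattice `Γ = ℤ[i]`, i.e. the Gaussian integers viewed as an additive
subgroup of `ℂ`. -/
noncomputable def Zi : AddSubgroup ℂ :=
  AddMonoidHom.range (GaussianInt.toComplex.toAddMonoidHom)

/-- `f` is (the underlying map of) a surjective real-linear isometry of `ℂ`. -/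
def IsLinIso (f : ℂ → ℂ) : Prop := ∃ R : ℂ ≃ₗᵢ[ℝ] ℂ, ⇑R = f

/-- `f` is a rotation of `ℂ`, i.e. multiplication by a complex number of modulus 1. -/
def IsRotation (f : ℂ → ℂ) : Prop := ∃ u : ℂ, ‖u‖ = 1 ∧ ∀ w, f w = u * w

/-- `f` is a reflection of `ℂ`, i.e. `w ↦ u * conj w` for a complex number `u` of
modulus 1. -/
def IsReflection (f : ℂ → ℂ) : Prop := ∃ u : ℂ, ‖u‖ = 1 ∧ ∀ w, f w = u * conj w

/-- The shifted square lattice `x + Γ` as a subset of `ℂ`. -/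
noncomputable def shiftedZi (x : ℂ) : Set ℂ := x +ᵥ (Zi : Set ℂ)

/-- `OC (x+Γ)`: the set of (maps of) surjective real-linear isometries `f` of `ℂ` such
that `(x+Γ) ∩ f(x+Γ)` is a coset `c + Λ`, with `c ∈ x+Γ` and `Λ` a finite-index
additive subgroup of `Γ = ℤ[i]`. -/
noncomputable def OCs (x : ℂ) : Set (ℂ → ℂ) :=
  {f | IsLinIso f ∧ ∃ c ∈ shiftedZi x, ∃ Λ : AddSubgroup ℂ, Λ ≤ Zi ∧
    Λ.relIndex Zi ≠ 0 ∧ shiftedZi x ∩ (f '' shiftedZi x) = c +ᵥ (Λ : Set ℂ)}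

/-- `SOC (x+Γ)`: the rotations among the coincidence isometries of `x + Γ`. -/
noncomputable def SOCs (x : ℂ) : Set (ℂ → ℂ) := {f ∈ OCs x | IsRotation f}

lemma mem_Zi_iff {z : ℂ} : z ∈ Zi ↔ ∃ m k : ℤ, z = (m : ℂ) + (k : ℂ) * I := by
  constructor
  · rintro ⟨g, rfl⟩
    exact ⟨g.re, g.im, by simpa using GaussianInt.toComplex_def g⟩
  · rintro ⟨m, k, rfl⟩
    exact ⟨⟨m, k⟩, by simp [GaussianInt.toComplex_def']⟩

lemma mem_shiftedZi_iff {x z : ℂ} : z ∈ shiftedZi x ↔ ∃ g ∈ Zi, z = x + g := by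
  simp only [shiftedZi, Set.mem_vadd_set, vadd_eq_add]
  exact ⟨fun ⟨y, hy, h⟩ => ⟨y, hy, h.symm⟩, fun ⟨y, hy, h⟩ => ⟨y, hy, h.symm⟩⟩

lemma coords_of_mul_nat {u : ℂ} {n : ℕ} {m k : ℤ} (hn : (n:ℝ) ≠ 0)
    (h : u * (n : ℂ) = (m : ℂ) + (k : ℂ) * I) :
    u.re = (m:ℝ)/(n:ℝ) ∧ u.im = (k:ℝ)/(n:ℝ) := by
  rw [Complex.ext_iff] at h
  simp at h
  constructor
  · field_simp; linarith [h.1]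
  · field_simp; linarith [h.2]

set_option maxHeartbeats 2000000 in
theorem OC_of_rationally_independent (a b : ℝ) (ha : Irrational a) (hb : Irrational b)
    (hind : ¬∃ r s : ℚ, a = (r : ℝ) + (s : ℝ) * b) :
    OCs (a + b * I) = ({id} : Set (ℂ → ℂ)) := by
  set x : ℂ := (a : ℂ) + (b : ℂ) * I with hxdef
  ext f
  simp only [Set.mem_singleton_iff]
  constructor
  · rintro ⟨⟨R, hR⟩, c, hc, Λ, hΛle, hrel, hset⟩
    -- get a positive natural n with (n : ℂ) ∈ Λ
    obtain ⟨n, hndef⟩ : ∃ n : ℕ, n = Λ.relIndex Zi := ⟨_, rfl⟩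
    have hn' : n ≠ 0 := by rw [hndef]; exact hrel
    have hn0 : (n:ℝ) ≠ 0 := Nat.cast_ne_zero.mpr hn'
    have h1Z : (1:ℂ) ∈ Zi := mem_Zi_iff.2 ⟨1, 0, by simp⟩
    have hNmem : ((n:ℕ):ℂ) ∈ Λ := by
      haveI : (Λ.addSubgroupOf Zi).FiniteIndex := ⟨hrel⟩
      have h := (Λ.addSubgroupOf Zi).nsmul_index_mem ⟨1, h1Z⟩
      rw [AddSubgroup.mem_addSubgroupOf] at h
      rw [show (Λ.addSubgroupOf Zi).index = n from hndef.symm] at h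
      simpa using h
    -- c and c + n lie in the image of the shifted lattice
    have hcimg : c ∈ f '' shiftedZi x := by
      have : c ∈ shiftedZi x ∩ f '' shiftedZi x := by
        rw [hset]
        exact Set.mem_vadd_set.2 ⟨0, Λ.zero_mem, add_zero c⟩
      exact this.2
    have hcnimg : c + (n:ℂ) ∈ f '' shiftedZi x := by
      have : c + (n:ℂ) ∈ shiftedZi x ∩ f '' shiftedZi x := by
        rw [hset]
        exact Set.mem_vadd_set.2 ⟨(n:ℂ), hNmem, rfl⟩
      exact this.2
    obtain ⟨g1, hg1, hc1⟩ := mem_shiftedZi_iff.1 hc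
    obtain ⟨z2, hz2, hfz2⟩ := hcimg
    obtain ⟨g2, hg2, rfl⟩ := mem_shiftedZi_iff.1 hz2
    obtain ⟨z3, hz3, hfz3⟩ := hcnimg
    obtain ⟨g3, hg3, rfl⟩ := mem_shiftedZi_iff.1 hz3
    obtain ⟨m1, k1, hg1e⟩ := mem_Zi_iff.1 hg1
    obtain ⟨m2, k2, hg2e⟩ := mem_Zi_iff.1 hg2
    have hδ : g3 - g2 ∈ Zi := sub_mem hg3 hg2
    obtain ⟨m, k, hδe⟩ := mem_Zi_iff.1 hδ
    -- norm-one facts about u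
    obtain ⟨v, hv⟩ := linear_isometry_complex R
    rcases hv with hv | hv
    · -- rotation case : f w = u * w
      obtain ⟨u, hudef⟩ : ∃ u : ℂ, u = (v : ℂ) := ⟨_, rfl⟩
      have hf : ∀ w, f w = u * w := by
        intro w; rw [← hR, hv, rotation_apply, hudef]
      have hnorm : u.re ^ 2 + u.im ^ 2 = 1 := by
        have h1 : Complex.normSq u = 1 := by
          rw [hudef, ← Complex.sq_norm, Circle.norm_coe]; norm_num
        rw [Complex.normSq_apply] at h1; nlinarith [h1]
      have huc : u * conj u = 1 := by
        rw [Complex.mul_conj]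
        norm_cast
        rw [Complex.normSq_apply]; push_cast; linarith [hnorm]
      -- u * (g3 - g2) = n
      have hun : u * (g3 - g2) = (n:ℂ) := by
        rw [hf] at hfz2 hfz3
        linear_combination hfz3 - hfz2
      -- u * n = conj (g3 - g2)
      have hconj : u * (n:ℂ) = conj (g3 - g2) := by
        have h2 : conj u * conj (g3 - g2) = (n:ℂ) := by
          have := congrArg conj hun
          simpa [map_mul] using this
        calc u * (n:ℂ) = u * (conj u * conj (g3 - g2)) := by rw [h2]
          _ = (u * conj u) * conj (g3 - g2) := by ring
          _ = conj (g3 - g2) := by rw [huc, one_mul]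
      have hconj2 : u * (n:ℂ) = ((m:ℂ)) + ((-k : ℤ):ℂ) * I := by
        rw [hconj, hδe]; push_cast
        simp [Complex.ext_iff]
      obtain ⟨hPre, hPim⟩ := coords_of_mul_nat hn0 hconj2
      -- the main coset equation
      have heq : u * (x + g2) = x + g1 := by rw [← hf, hfz2, hc1]
      by_cases hP1 : u.re = 1
      · -- u = 1, f = id
        have hQ0 : u.im = 0 := by nlinarith [hnorm]
        have hu1 : u = 1 := by
          apply Complex.ext <;> simp [hP1, hQ0]
        funext w
        rw [hf, hu1, one_mul, id]
      · -- u ≠ 1 : derive that a is rational, contradiction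
        exfalso
        obtain ⟨p, hpdef⟩ : ∃ p : ℚ, p = (m : ℚ) / (n : ℚ) := ⟨_, rfl⟩
        obtain ⟨q, hqdef⟩ : ∃ q : ℚ, q = (-k : ℚ) / (n : ℚ) := ⟨_, rfl⟩
        have hP : u.re = (p:ℝ) := by rw [hPre, hpdef]; push_cast; ring
        have hQ : u.im = (q:ℝ) := by rw [hPim, hqdef]; push_cast; ring
        have hre : (p:ℝ) * (a + m2) - (q:ℝ) * (b + k2) = a + m1 := by
          have := congrArg Complex.re heq
          rw [hg1e, hg2e] at this
          simp [hxdef, Complex.mul_re, hP, hQ] at this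
          linear_combination this
        have him : (p:ℝ) * (b + k2) + (q:ℝ) * (a + m2) = b + k1 := by
          have := congrArg Complex.im heq
          rw [hg1e, hg2e] at this
          simp [hxdef, Complex.mul_im, hP, hQ] at this
          linear_combination this
        have hnorm' : (p:ℝ)^2 + (q:ℝ)^2 = 1 := by rw [← hP, ← hQ]; exact hnorm
        have hp1 : (p:ℝ) ≠ 1 := by rw [← hP]; exact hP1
        have hp1' : (1:ℝ) - (p:ℝ) ≠ 0 := by intro h; apply hp1; linarith
        obtain ⟨t, htdef⟩ : ∃ t : ℚ,
            t = ((1-p)*(p*m2 - q*k2 - m1) - q*(p*k2 + q*m2 - k1)) / (2*(1-p)) := ⟨_, rfl⟩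
        have hat : a = (t:ℝ) := by
          have hden : (2:ℝ)*(1-(p:ℝ)) ≠ 0 := by
            intro h; apply hp1'; linarith
          rw [htdef]
          push_cast
          rw [eq_div_iff hden]
          linear_combination ((p:ℝ) - 1) * hre + (q:ℝ) * him - a * hnorm'
        exact ha.ne_rat t hat
    · -- reflection case : f w = u * conj w
      exfalso
      obtain ⟨u, hudef⟩ : ∃ u : ℂ, u = (v : ℂ) := ⟨_, rfl⟩
      have hf : ∀ w, f w = u * conj w := by
        intro w
        rw [← hR, hv, hudef]
        simp [rotation_apply]
      have hnorm : u.re ^ 2 + u.im ^ 2 = 1 := by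
        have h1 : Complex.normSq u = 1 := by
          rw [hudef, ← Complex.sq_norm, Circle.norm_coe]; norm_num
        rw [Complex.normSq_apply] at h1; nlinarith [h1]
      have huc : u * conj u = 1 := by
        rw [Complex.mul_conj]
        norm_cast
        rw [Complex.normSq_apply]; push_cast; linarith [hnorm]
      have hun : u * conj (g3 - g2) = (n:ℂ) := by
        rw [hf] at hfz2 hfz3
        have h4 : g3 - g2 = (x + g3) - (x + g2) := by ring
        rw [h4, map_sub, mul_sub, hfz2, hfz3]; ring
      have hδu : u * (n:ℂ) = g3 - g2 := by
        have h2 : conj u * (g3 - g2) = (n:ℂ) := by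
          have := congrArg conj hun
          simpa [map_mul] using this
        calc u * (n:ℂ) = u * (conj u * (g3 - g2)) := by rw [h2]
          _ = (u * conj u) * (g3 - g2) := by ring
          _ = g3 - g2 := by rw [huc, one_mul]
      have hconj2 : u * (n:ℂ) = (m:ℂ) + (k:ℂ) * I := by rw [hδu, hδe]
      obtain ⟨hPre, hPim⟩ := coords_of_mul_nat hn0 hconj2
      obtain ⟨p, hpdef⟩ : ∃ p : ℚ, p = (m : ℚ) / (n : ℚ) := ⟨_, rfl⟩
      obtain ⟨q, hqdef⟩ : ∃ q : ℚ, q = (k : ℚ) / (n : ℚ) := ⟨_, rfl⟩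
      have hP : u.re = (p:ℝ) := by rw [hPre, hpdef]; push_cast; ring
      have hQ : u.im = (q:ℝ) := by rw [hPim, hqdef]; push_cast; ring
      have heq : u * conj (x + g2) = x + g1 := by rw [← hf, hfz2, hc1]
      have hre : (p:ℝ) * (a + m2) + (q:ℝ) * (b + k2) = a + m1 := by
        have := congrArg Complex.re heq
        rw [hg1e, hg2e] at this
        simp [hxdef, Complex.mul_re, hP, hQ] at this
        linear_combination this
      have him : -(p:ℝ) * (b + k2) + (q:ℝ) * (a + m2) = b + k1 := by
        have := congrArg Complex.im heq
        rw [hg1e, hg2e] at this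
        simp [hxdef, Complex.mul_im, hP, hQ] at this
        linear_combination this
      have hnorm' : (p:ℝ)^2 + (q:ℝ)^2 = 1 := by rw [← hP, ← hQ]; exact hnorm
      rcases eq_or_ne q 0 with hq0 | hq0
      · have hq0' : (q:ℝ) = 0 := by rw [hq0]; norm_num
        have hp2 : ((p:ℝ) - 1) * ((p:ℝ) + 1) = 0 := by
          rw [hq0'] at hnorm'; nlinarith [hnorm']
        rcases mul_eq_zero.1 hp2 with h | h
        · -- p = 1 : b rational
          have hb' : b = ((-(k1:ℚ) - k2)/2 : ℚ) := by
            push_cast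
            rw [hq0'] at him
            have hp : (p:ℝ) = 1 := by linarith
            rw [hp] at him
            linarith [him]
          exact hb.ne_rat _ hb'
        · -- p = -1 : a rational
          have ha' : a = ((-(m1:ℚ) - m2)/2 : ℚ) := by
            push_cast
            rw [hq0'] at hre
            have hp : (p:ℝ) = -1 := by linarith
            rw [hp] at hre
            linarith [hre]
          exact ha.ne_rat _ ha'
      · -- q ≠ 0 : a = r + s b, contradicting rational independence
        apply hind
        have hq0' : (q:ℝ) ≠ 0 := Rat.cast_ne_zero.mpr hq0
        refine ⟨((k1:ℚ) + p*k2 - q*m2)/q, (1+p)/q, ?_⟩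
        push_cast
        field_simp
        linear_combination him
  · rintro rfl
    refine ⟨⟨LinearIsometryEquiv.refl ℝ ℂ, rfl⟩, x, ?_, Zi, le_rfl, ?_, ?_⟩
    · exact Set.mem_vadd_set.2 ⟨0, Zi.zero_mem, add_zero x⟩
    · simp [AddSubgroup.relIndex_self]
    · rw [Set.image_id, Set.inter_self]; rfl
end

section
/- Let x = a + b·i ∈ ℂ with a and b both irrational, and suppose a = p₁/q₁ + (p₂/q₂)·b, where p₁, p₂ ∈ ℤ, q₁, q₂ are positive integers, gcd(p₁,q₁) = gcd(p₂,q₂) = 1, and p₂·q₂ is even. If q₁ divides 2q₂, then OC(x+Γ) = {id, T}, where T is the reflection w ↦ ((p₂ + q₂·i)/(p₂ − q₂·i))·conj(w); otherwise OC(x+Γ) = {id}. -/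
open Pointwise Complex ComplexConjugate

lemma mem_Zi {w : ℂ} : w ∈ Zi ↔ ∃ m n : ℤ, w = (m : ℂ) + (n : ℂ) * I := by
  constructor
  · rintro ⟨g, rfl⟩
    exact ⟨g.re, g.im, by simp [GaussianInt.toComplex_def]⟩
  · rintro ⟨m, n, rfl⟩
    exact ⟨⟨m, n⟩, by simp [GaussianInt.toComplex_def']⟩

lemma int_mem_Zi (m n : ℤ) : (m : ℂ) + (n : ℂ) * I ∈ Zi := mem_Zi.2 ⟨m, n, rfl⟩

lemma Zi_mul {v w : ℂ} (hv : v ∈ Zi) (hw : w ∈ Zi) : v * w ∈ Zi := by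
  obtain ⟨m, n, rfl⟩ := mem_Zi.1 hv
  obtain ⟨m', n', rfl⟩ := mem_Zi.1 hw
  refine mem_Zi.2 ⟨m * m' - n * n', m * n' + n * m', ?_⟩
  push_cast
  linear_combination ((n : ℂ) * n') * Complex.I_sq

lemma Zi_conj {v : ℂ} (hv : v ∈ Zi) : conj v ∈ Zi := by
  obtain ⟨m, n, rfl⟩ := mem_Zi.1 hv
  refine mem_Zi.2 ⟨m, -n, ?_⟩
  push_cast
  simp [map_add, map_mul, Complex.conj_I]

lemma mem_shiftedZi {x y : ℂ} : y ∈ shiftedZi x ↔ y - x ∈ Zi := by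
  rw [shiftedZi, Set.mem_vadd_set_iff_neg_vadd_mem]
  simp [SetLike.mem_coe, neg_add_eq_sub]

lemma sepR {b : ℝ} (hb : Irrational b) (A B : ℤ) (h : b * (A : ℝ) + (B : ℝ) = 0) :
    A = 0 ∧ B = 0 := by
  have hA : A = 0 := by
    by_contra hA
    apply hb
    refine ⟨-(B : ℚ) / (A : ℚ), ?_⟩
    have hA' : (A : ℝ) ≠ 0 := Int.cast_ne_zero.2 hA
    push_cast
    field_simp
    linarith
  refine ⟨hA, ?_⟩
  rw [hA] at h
  simpa using h

lemma sepC {b : ℝ} (hb : Irrational b) (A₁ A₂ B₁ B₂ : ℤ)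
    (h : (b : ℂ) * ((A₁ : ℂ) + (A₂ : ℂ) * I) + ((B₁ : ℂ) + (B₂ : ℂ) * I) = 0) :
    A₁ = 0 ∧ A₂ = 0 := by
  have hre := congrArg Complex.re h
  have him := congrArg Complex.im h
  simp at hre him
  exact ⟨(sepR hb A₁ B₁ (by push_cast; linarith)).1, (sepR hb A₂ B₂ (by push_cast; linarith)).1⟩
lemma id_mem_OCs (x : ℂ) : id ∈ OCs x := by
  refine ⟨⟨LinearIsometryEquiv.refl ℝ ℂ, rfl⟩, x, mem_shiftedZi.2 (by simpa using Zi.zero_mem), Zi, le_rfl, ?_, ?_⟩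
  · rw [AddSubgroup.relIndex_self]; exact one_ne_zero
  · rw [Set.image_id]
    rw [Set.inter_self]
    rfl

lemma refl_mem_OCs (a b : ℝ) (hb : Irrational b)
    (p₁ p₂ q₁ q₂ : ℤ) (hq₁ : 0 < q₁) (hq₂ : 0 < q₂)
    (hcop₂ : Int.gcd p₂ q₂ = 1) (heven : Even (p₂ * q₂))
    (hab : a = (p₁ : ℝ) / (q₁ : ℝ) + ((p₂ : ℝ) / (q₂ : ℝ)) * b)
    (hdvd : q₁ ∣ 2 * q₂) :
    (fun w => (((p₂ : ℂ) + (q₂ : ℂ) * I) / ((p₂ : ℂ) - (q₂ : ℂ) * I)) * conj w) ∈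
      OCs ((a : ℝ) + (b : ℝ) * I) := by
  set z : ℂ := (p₂ : ℂ) + (q₂ : ℂ) * I with hzdef
  set wc : ℂ := (p₂ : ℂ) - (q₂ : ℂ) * I with hwcdef
  set u : ℂ := z / wc with hudef
  set x : ℂ := (a : ℝ) + (b : ℝ) * I with hxdef
  -- basic nonvanishing
  have hq₁R : (q₁ : ℝ) ≠ 0 := Int.cast_ne_zero.2 hq₁.ne'
  have hq₂R : (q₂ : ℝ) ≠ 0 := Int.cast_ne_zero.2 hq₂.ne'
  have hwc0 : wc ≠ 0 := by
    intro h
    have := congrArg Complex.im h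
    simp [hwcdef] at this
    exact hq₂R (by exact_mod_cast this)
  have hz0 : z ≠ 0 := by
    intro h
    have := congrArg Complex.im h
    simp [hzdef] at this
    exact hq₂R (by exact_mod_cast this)
  have hNpos : 0 < p₂ ^ 2 + q₂ ^ 2 := by positivity
  have hzw : z * wc = ((p₂ ^ 2 + q₂ ^ 2 : ℤ) : ℂ) := by
    push_cast
    linear_combination (-(q₂ : ℂ) ^ 2) * Complex.I_sq
  have haR : a * ((q₁ : ℝ) * (q₂ : ℝ)) = (p₁ : ℝ) * q₂ + (p₂ : ℝ) * q₁ * b := by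
    subst hab; field_simp
  have haC : (a : ℂ) * ((q₁ : ℂ) * (q₂ : ℂ)) = (p₁ : ℂ) * q₂ + (p₂ : ℂ) * q₁ * (b : ℂ) := by
    have := congrArg (Complex.ofReal) haR
    push_cast at this ⊢
    exact this
  have hcx : conj x = (a : ℂ) - (b : ℂ) * I := by
    simp [hxdef, map_add, map_mul, Complex.conj_I, Complex.conj_ofReal]
    ring
  -- Bezout for p₂, q₂
  obtain ⟨s, t, hst⟩ := Int.isCoprime_iff_gcd_eq_one.mpr hcop₂
  -- N is odd
  have hNodd : Odd (p₂ ^ 2 + q₂ ^ 2) := by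
    rcases Int.even_or_odd p₂ with hp | hp <;> rcases Int.even_or_odd q₂ with hq | hq
    · exfalso
      have h2 : IsUnit (2 : ℤ) :=
        (Int.isCoprime_iff_gcd_eq_one.mpr hcop₂).isUnit_of_dvd' hp.two_dvd hq.two_dvd
      rw [Int.isUnit_iff] at h2; omega
    · exact (Int.even_pow.mpr ⟨hp, two_ne_zero⟩).add_odd hq.pow
    · exact hp.pow.add_even (Int.even_pow.mpr ⟨hq, two_ne_zero⟩)
    · exact absurd heven (Int.not_even_iff_odd.mpr (hp.mul hq))
  obtain ⟨k, hk⟩ := hNodd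
  obtain ⟨m0, hm0⟩ := hdvd
  obtain ⟨M, hM⟩ : ∃ M : ℤ, 2 * p₁ * q₂ = q₁ * M := ⟨p₁ * m0, by linear_combination p₁ * hm0⟩
  have hstC : (s : ℂ) * p₂ + (t : ℂ) * q₂ = 1 := by exact_mod_cast congrArg (fun r : ℤ => (r : ℂ)) hst
  have hkC : (p₂ : ℂ) ^ 2 + (q₂ : ℂ) ^ 2 = 2 * (k : ℂ) + 1 := by
    exact_mod_cast congrArg (fun r : ℤ => (r : ℂ)) hk
  have hMC : 2 * (p₁ : ℂ) * (q₂ : ℂ) = (q₁ : ℂ) * (M : ℂ) := by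
    exact_mod_cast congrArg (fun r : ℤ => (r : ℂ)) hM
  -- Gaussian Bezout coefficients
  set AA : ℂ := ((p₂ - k * s : ℤ) : ℂ) + ((k * t - q₂ : ℤ) : ℂ) * I with hAAdef
  set BB : ℂ := ((-(k * s) : ℤ) : ℂ) + ((-(k * t) : ℤ) : ℂ) * I with hBBdef
  have hAA : AA ∈ Zi := int_mem_Zi _ _
  have hBB : BB ∈ Zi := int_mem_Zi _ _
  have hkey : z * AA + wc * BB = 1 := by
    rw [hAAdef, hBBdef, hzdef, hwcdef]
    push_cast
    linear_combination (2 * (k : ℂ) * t * q₂ - (q₂ : ℂ) ^ 2) * Complex.I_sq +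
      (-2 * (k : ℂ)) * hstC + hkC
  set γ₂ : ℂ := AA * (-(M : ℂ) * I) with hγ₂def
  set γ₁ : ℂ := -(BB * (-(M : ℂ) * I)) with hγ₁def
  have hvZi : -(M : ℂ) * I ∈ Zi := by
    have := int_mem_Zi 0 (-M); push_cast at this; simpa using this
  have hγ₁Zi : γ₁ ∈ Zi := neg_mem (Zi_mul hBB hvZi)
  have hγ₂Zi : γ₂ ∈ Zi := Zi_mul hAA hvZi
  have hv2 : z * γ₂ - wc * γ₁ = -(M : ℂ) * I := by
    rw [hγ₂def, hγ₁def]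
    linear_combination (-(M : ℂ) * I) * hkey
  have hv1 : (q₁ : ℂ) * (q₂ : ℂ) * (wc * x - z * conj x) =
      (q₁ : ℂ) * (q₂ : ℂ) * (-(M : ℂ) * I) := by
    rw [hcx, hxdef, hzdef, hwcdef]
    linear_combination (-2 * (q₂ : ℂ) * I) * haC + (-(q₂ : ℂ) * I) * hMC
  have hq₁q₂C : (q₁ : ℂ) * (q₂ : ℂ) ≠ 0 := by
    push_cast
    exact mul_ne_zero (by exact_mod_cast hq₁R) (by exact_mod_cast hq₂R)
  have hv1' : wc * x - z * conj x = -(M : ℂ) * I := mul_left_cancel₀ hq₁q₂C hv1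
  have hmain : wc * (x + γ₁) = z * (conj x + γ₂) := by linear_combination hv1' - hv2
  have hcu : x + γ₁ = u * (conj x + γ₂) := by
    rw [hudef, div_mul_eq_mul_div, eq_div_iff hwc0]
    linear_combination hmain
  -- the subgroup Λ = Γ ∩ uΓ
  set Λ : AddSubgroup ℂ := Zi ⊓ AddSubgroup.map (AddMonoidHom.mulLeft u) Zi with hΛdef
  have hmemΛ : ∀ w : ℂ, w ∈ Λ ↔ w ∈ Zi ∧ ∃ μ ∈ Zi, u * μ = w := by
    intro w
    rw [hΛdef, AddSubgroup.mem_inf]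
    simp only [AddSubgroup.mem_map, AddMonoidHom.coe_mulLeft]
  -- Λ has finite index via N' = p₂² + q₂²
  set N' : ℕ := (p₂ ^ 2 + q₂ ^ 2).toNat with hN'def
  have hN'cast : ((N' : ℤ)) = p₂ ^ 2 + q₂ ^ 2 := Int.toNat_of_nonneg hNpos.le
  have hN'pos : 0 < N' := by omega
  haveI : NeZero N' := ⟨hN'pos.ne'⟩
  have hwcZi : wc ∈ Zi := by
    have := int_mem_Zi p₂ (-q₂)
    push_cast at this
    rw [hwcdef]
    convert this using 1
    ring
  have hzZi : z ∈ Zi := by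
    have := int_mem_Zi p₂ q₂
    rw [hzdef]
    exact this
  have hkeyΛ : ∀ m n : ℤ, ((N' : ℂ)) * ((m : ℂ) + (n : ℂ) * I) ∈ Λ := by
    intro m n
    rw [hmemΛ]
    constructor
    · have := int_mem_Zi ((N' : ℤ) * m) ((N' : ℤ) * n)
      push_cast at this
      convert this using 1
      ring
    · refine ⟨wc * (wc * ((m : ℂ) + (n : ℂ) * I)), Zi_mul hwcZi (Zi_mul hwcZi (int_mem_Zi m n)), ?_⟩
      have huwc : u * wc = z := div_mul_cancel₀ _ hwc0
      calc u * (wc * (wc * ((m : ℂ) + (n : ℂ) * I)))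
          = (u * wc) * wc * ((m : ℂ) + (n : ℂ) * I) := by ring
        _ = (z * wc) * ((m : ℂ) + (n : ℂ) * I) := by rw [huwc]
        _ = ((N' : ℂ)) * ((m : ℂ) + (n : ℂ) * I) := by
            rw [hzw]
            congr 1
            exact_mod_cast (congrArg (fun r : ℤ => (r : ℂ)) hN'cast).symm
  have hrelindex : Λ.relIndex Zi ≠ 0 := by
    set K : AddSubgroup Zi := Λ.addSubgroupOf Zi with hKdef
    have hfin : Finite (Zi ⧸ K) := by
      refine Finite.of_surjective
        (fun p : ZMod N' × ZMod N' =>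
          (QuotientAddGroup.mk ⟨((p.1.val : ℤ) : ℂ) + ((p.2.val : ℤ) : ℂ) * I,
            int_mem_Zi _ _⟩ : Zi ⧸ K)) ?_
      intro q
      refine QuotientAddGroup.induction_on q ?_
      rintro ⟨ζ, hζ⟩
      obtain ⟨m, n, rfl⟩ := mem_Zi.1 hζ
      refine ⟨((m : ZMod N'), (n : ZMod N')), ?_⟩
      rw [QuotientAddGroup.eq]
      rw [AddSubgroup.mem_addSubgroupOf]
      have hval₁ : (((m : ZMod N').val : ℤ)) = m % (N' : ℤ) := ZMod.val_intCast m
      have hval₂ : (((n : ZMod N').val : ℤ)) = n % (N' : ℤ) := ZMod.val_intCast n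
      have hmem := hkeyΛ (m / (N' : ℤ)) (n / (N' : ℤ))
      have e1 : ((N' : ℤ)) * (m / (N' : ℤ)) = m - m % (N' : ℤ) := by
        have h := Int.mul_ediv_add_emod m (N' : ℤ); linarith
      have e2 : ((N' : ℤ)) * (n / (N' : ℤ)) = n - n % (N' : ℤ) := by
        have h := Int.mul_ediv_add_emod n (N' : ℤ); linarith
      have e1C : ((N' : ℂ)) * ((m / (N' : ℤ) : ℤ) : ℂ) = (m : ℂ) - ((m % (N' : ℤ) : ℤ) : ℂ) := by
        exact_mod_cast congrArg (fun r : ℤ => (r : ℂ)) e1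
      have e2C : ((N' : ℂ)) * ((n / (N' : ℤ) : ℤ) : ℂ) = (n : ℂ) - ((n % (N' : ℤ) : ℤ) : ℂ) := by
        exact_mod_cast congrArg (fun r : ℤ => (r : ℂ)) e2
      convert hmem using 1
      push_cast [AddSubgroup.coe_add, AddSubgroup.coe_neg, hval₁, hval₂]
      linear_combination -e1C - I * e2C
    exact AddSubgroup.index_ne_zero_of_finite
  -- norm of u
  have hconjwc : conj wc = z := by
    rw [hwcdef, hzdef]
    simp [map_sub, map_mul, Complex.conj_I]
  have hnormu : ‖u‖ = 1 := by
    rw [hudef, norm_div, ← hconjwc, RCLike.norm_conj]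
    exact div_self (norm_ne_zero_iff.2 hwc0)
  refine ⟨⟨conjLIE.trans (rotation ⟨u, by simp [Submonoid.unitSphere, hnormu]⟩), ?_⟩,
    x + γ₁, mem_shiftedZi.2 (by simpa using hγ₁Zi), Λ, inf_le_left, hrelindex, ?_⟩
  · funext w
    simp [hudef]
    exact rotation_apply _ _
  · ext y
    simp only [Set.mem_inter_iff]
    constructor
    · rintro ⟨hy1, w', hw', rfl⟩
      have hw'Zi : w' - x ∈ Zi := mem_shiftedZi.1 hw'
      rw [Set.mem_vadd_set]
      refine ⟨u * conj w' - (x + γ₁), ?_, by simp [vadd_eq_add]⟩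
      rw [SetLike.mem_coe, hmemΛ]
      constructor
      · have h1 : u * conj w' - x ∈ Zi := by simpa using mem_shiftedZi.1 hy1
        have := sub_mem h1 hγ₁Zi
        convert this using 1
        ring
      · refine ⟨conj (w' - x) - γ₂, sub_mem (Zi_conj hw'Zi) hγ₂Zi, ?_⟩
        rw [map_sub, hcu]
        ring
    · intro hy
      rw [Set.mem_vadd_set] at hy
      obtain ⟨lam, hlam, rfl⟩ := hy
      simp only [vadd_eq_add]
      rw [SetLike.mem_coe, hmemΛ] at hlam
      obtain ⟨hlamZi, μ, hμZi, hμeq⟩ := hlam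
      constructor
      · rw [mem_shiftedZi]
        have := add_mem hγ₁Zi hlamZi
        convert this using 1
        ring
      · refine ⟨x + conj (γ₂ + μ), mem_shiftedZi.2 (by simpa using Zi_conj (add_mem hγ₂Zi hμZi)), ?_⟩
        have hcu' : (a : ℂ) + (b : ℂ) * I + γ₁ = u * (((a : ℂ) - (b : ℂ) * I) + γ₂) := by
          rw [← hxdef, hcu, hcx]
        have hgoal : u * conj (x + conj (γ₂ + μ)) = x + γ₁ + lam := by
          simp only [hxdef, map_add, Complex.conj_conj, map_mul, Complex.conj_ofReal,
            Complex.conj_I]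
          linear_combination hμeq - hcu'
        exact hgoal

lemma OCs_sub (a b : ℝ) (hb : Irrational b)
    (p₁ p₂ q₁ q₂ : ℤ) (hq₁ : 0 < q₁) (hq₂ : 0 < q₂)
    (hcop₁ : Int.gcd p₁ q₁ = 1)
    (hab : a = (p₁ : ℝ) / (q₁ : ℝ) + ((p₂ : ℝ) / (q₂ : ℝ)) * b)
    (f : ℂ → ℂ) (hf : f ∈ OCs ((a : ℝ) + (b : ℝ) * I)) :
    f = id ∨ ((f = fun w => (((p₂ : ℂ) + (q₂ : ℂ) * I) / ((p₂ : ℂ) - (q₂ : ℂ) * I)) * conj w)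
      ∧ q₁ ∣ 2 * q₂) := by
  set z : ℂ := (p₂ : ℂ) + (q₂ : ℂ) * I with hzdef
  set wc : ℂ := (p₂ : ℂ) - (q₂ : ℂ) * I with hwcdef
  set x : ℂ := (a : ℝ) + (b : ℝ) * I with hxdef
  have hq₁R : (q₁ : ℝ) ≠ 0 := Int.cast_ne_zero.2 hq₁.ne'
  have hq₂R : (q₂ : ℝ) ≠ 0 := Int.cast_ne_zero.2 hq₂.ne'
  have hwc0 : wc ≠ 0 := by
    intro h
    have := congrArg Complex.im h
    simp [hwcdef] at this
    exact hq₂R (by exact_mod_cast this)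
  have hNpos : 0 < p₂ ^ 2 + q₂ ^ 2 := by positivity
  have haR : a * ((q₁ : ℝ) * (q₂ : ℝ)) = (p₁ : ℝ) * q₂ + (p₂ : ℝ) * q₁ * b := by
    subst hab; field_simp
  have haC : (a : ℂ) * ((q₁ : ℂ) * (q₂ : ℂ)) = (p₁ : ℂ) * q₂ + (p₂ : ℂ) * q₁ * (b : ℂ) := by
    have := congrArg (Complex.ofReal) haR
    push_cast at this ⊢
    exact this
  have hcx : conj x = (a : ℂ) - (b : ℂ) * I := by
    simp [hxdef, map_add, map_mul, Complex.conj_I, Complex.conj_ofReal]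
    ring
  obtain ⟨⟨R, hR⟩, c, hc, Λ, hΛle, hrel, hset⟩ := hf
  obtain ⟨u0, hcase⟩ := linear_isometry_complex R
  -- data about c
  have hγcZi : c - x ∈ Zi := mem_shiftedZi.1 hc
  obtain ⟨g₁, g₂, hg⟩ := mem_Zi.1 hγcZi
  have hcmem2 : c ∈ f '' shiftedZi x := by
    have : c ∈ shiftedZi x ∩ f '' shiftedZi x := by
      rw [hset, Set.mem_vadd_set]
      exact ⟨0, by simpa using Λ.zero_mem, by simp⟩
    exact this.2
  obtain ⟨y₀, hy₀, hfy₀⟩ := hcmem2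
  have hδZi : y₀ - x ∈ Zi := mem_shiftedZi.1 hy₀
  -- every element of Λ is in the image lattice
  have hΛim : ∀ lam ∈ Λ, ∃ y ∈ shiftedZi x, lam = f y - f y₀ := by
    intro lam hlam
    have : c + lam ∈ shiftedZi x ∩ f '' shiftedZi x := by
      rw [hset, Set.mem_vadd_set]
      exact ⟨lam, by simpa using hlam, by simp [vadd_eq_add]⟩
    obtain ⟨y, hy, hfy⟩ := this.2
    exact ⟨y, hy, by rw [hfy, hfy₀]; ring⟩
  -- the natural number n = [Γ : Λ] is a nonzero element of Λ
  set n : ℕ := Λ.relIndex Zi with hndef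
  have h1Zi : (1 : ℂ) ∈ Zi := by simpa using int_mem_Zi 1 0
  have hnΛ : ((n : ℕ) : ℂ) ∈ Λ := by
    have hsm := AddSubgroup.nsmul_index_mem (Λ.addSubgroupOf Zi) (⟨1, h1Zi⟩ : Zi)
    rw [AddSubgroup.mem_addSubgroupOf] at hsm
    have hcoe : (((Λ.addSubgroupOf Zi).index • (⟨1, h1Zi⟩ : Zi) : Zi) : ℂ)
        = (((Λ.addSubgroupOf Zi).index : ℕ) : ℂ) := by
      push_cast
      simp
    rw [hcoe] at hsm
    exact hsm
  have hn0 : n ≠ 0 := hrel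
  have hnC0 : ((n : ℕ) : ℂ) ≠ 0 := Nat.cast_ne_zero.2 hn0
  obtain ⟨d₁, d₂, hd⟩ := mem_Zi.1 hδZi
  rcases hcase with hrot | hrefl
  · -- rotation case: f must be the identity
    left
    have hfw : ∀ w, f w = (u0 : ℂ) * w := by
      intro w
      rw [← hR, hrot, rotation_apply]
    -- lam = u0 * μ for lam = n
    obtain ⟨y, hy, hlam⟩ := hΛim _ hnΛ
    have hμZi : (y - x) - (y₀ - x) ∈ Zi := sub_mem (mem_shiftedZi.1 hy) hδZi
    obtain ⟨m₁, m₂, hm⟩ := mem_Zi.1 hμZi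
    have heqn : ((n : ℕ) : ℂ) = (u0 : ℂ) * ((m₁ : ℂ) + (m₂ : ℂ) * I) := by
      rw [hlam, hfw, hfw, ← hm]
      ring
    -- key complex equation : μ * c = n * y₀  with c = u0 * y₀
    have hceq : c = (u0 : ℂ) * y₀ := by rw [← hfy₀, hfw]
    have hC : ((m₁ : ℂ) + (m₂ : ℂ) * I) * (x + ((g₁ : ℂ) + (g₂ : ℂ) * I))
        = ((n : ℕ) : ℂ) * (x + ((d₁ : ℂ) + (d₂ : ℂ) * I)) := by
      rw [← hg, ← hd]
      have h1 : x + (c - x) = c := by ring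
      have h2 : x + (y₀ - x) = y₀ := by ring
      rw [h1, h2, hceq, heqn]
      ring
    set nZ : ℤ := (n : ℤ) with hnZdef
    -- the constant term of the separated equation
    have hC₀Zi : (((m₁ : ℂ) + (m₂ : ℂ) * I) - ((nZ : ℂ))) * ((p₁ * q₂ : ℤ) : ℂ)
        + ((q₁ * q₂ : ℤ) : ℂ) * (((m₁ : ℂ) + (m₂ : ℂ) * I) * ((g₁ : ℂ) + (g₂ : ℂ) * I)
          - ((nZ : ℂ)) * ((d₁ : ℂ) + (d₂ : ℂ) * I)) ∈ Zi := by
      have hnZi : ((nZ : ℂ)) ∈ Zi := by simpa using int_mem_Zi nZ 0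
      have hPZi : (((p₁ * q₂ : ℤ)) : ℂ) ∈ Zi := by simpa using int_mem_Zi (p₁ * q₂) 0
      have hLZi : (((q₁ * q₂ : ℤ)) : ℂ) ∈ Zi := by simpa using int_mem_Zi (q₁ * q₂) 0
      exact add_mem (Zi_mul (sub_mem (int_mem_Zi m₁ m₂) hnZi) hPZi)
        (Zi_mul hLZi (sub_mem (Zi_mul (int_mem_Zi m₁ m₂) (int_mem_Zi g₁ g₂))
          (Zi_mul hnZi (int_mem_Zi d₁ d₂))))
    obtain ⟨e₁, e₂, hE⟩ := mem_Zi.1 hC₀Zi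
    have hsepin : (b : ℂ) * ((((m₁ - nZ) * (p₂ * q₁) - m₂ * (q₁ * q₂) : ℤ) : ℂ)
        + (((m₁ - nZ) * (q₁ * q₂) + m₂ * (p₂ * q₁) : ℤ) : ℂ) * I)
        + (((e₁ : ℤ) : ℂ) + ((e₂ : ℤ) : ℂ) * I) = 0 := by
      rw [← hE]
      push_cast [hxdef]
      push_cast [hxdef] at hC
      linear_combination ((q₁ : ℂ) * q₂) * hC - ((m₁ : ℂ) + m₂ * I - n) * haC
        - ((b : ℂ) * m₂ * (q₁ * q₂)) * Complex.I_sq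
    obtain ⟨hA₁, hA₂⟩ := sepC hb _ _ _ _ hsepin
    -- deduce m₂ = 0 and m₁ = n
    have hLne : (q₁ * q₂ : ℤ) ≠ 0 := by positivity
    have h0 : ((m₁ - nZ) ^ 2 + m₂ ^ 2) * (q₁ * q₂) = 0 := by
      linear_combination (m₁ - nZ) * hA₂ - m₂ * hA₁
    have h00 : (m₁ - nZ) ^ 2 + m₂ ^ 2 = 0 := by
      rcases mul_eq_zero.mp h0 with h | h
      · exact h
      · exact absurd h hLne
    have hm₂0 : m₂ = 0 := by nlinarith [sq_nonneg (m₁ - nZ), sq_nonneg m₂]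
    have hm₁n : m₁ = nZ := by nlinarith [sq_nonneg (m₁ - nZ), sq_nonneg m₂]
    have hu01 : (u0 : ℂ) = 1 := by
      have hth := heqn
      rw [hm₂0, hm₁n] at hth
      push_cast at hth
      have h2 : (1 - (u0 : ℂ)) * ((n : ℕ) : ℂ) = 0 := by linear_combination hth
      rcases mul_eq_zero.mp h2 with h | h
      · linear_combination -h
      · exact absurd h hnC0
    funext w
    rw [← hR, hrot, rotation_apply, hu01, one_mul, id_eq]
  · -- reflection case
    right
    have hfw : ∀ w, f w = (u0 : ℂ) * conj w := by
      intro w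
      rw [← hR, hrefl]
      simp
    have hδ'Zi : conj (y₀ - x) ∈ Zi := Zi_conj hδZi
    obtain ⟨d₁', d₂', hd'⟩ := mem_Zi.1 hδ'Zi
    obtain ⟨y, hy, hlam⟩ := hΛim _ hnΛ
    have hμZi : conj ((y - x) - (y₀ - x)) ∈ Zi :=
      Zi_conj (sub_mem (mem_shiftedZi.1 hy) hδZi)
    obtain ⟨m₁, m₂, hm⟩ := mem_Zi.1 hμZi
    have heqn : ((n : ℕ) : ℂ) = (u0 : ℂ) * ((m₁ : ℂ) + (m₂ : ℂ) * I) := by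
      rw [hlam, hfw, hfw, ← hm]
      rw [map_sub, map_sub, map_sub]
      ring
    have hceq : c = (u0 : ℂ) * (conj x + ((d₁' : ℂ) + (d₂' : ℂ) * I)) := by
      rw [← hfy₀, hfw, ← hd']
      rw [← map_add]
      congr 1
      ring
    -- key complex equation : μ * c = n * (conj x + δ')
    have hC : ((m₁ : ℂ) + (m₂ : ℂ) * I) * (x + ((g₁ : ℂ) + (g₂ : ℂ) * I))
        = ((n : ℕ) : ℂ) * (conj x + ((d₁' : ℂ) + (d₂' : ℂ) * I)) := by
      have h1 : x + (c - x) = c := by ring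
      rw [← hg, h1, hceq, heqn]
      ring
    set nZ : ℤ := (n : ℤ) with hnZdef
    have hC₀Zi : (((m₁ : ℂ) + (m₂ : ℂ) * I) - ((nZ : ℂ))) * ((p₁ * q₂ : ℤ) : ℂ)
        + ((q₁ * q₂ : ℤ) : ℂ) * (((m₁ : ℂ) + (m₂ : ℂ) * I) * ((g₁ : ℂ) + (g₂ : ℂ) * I)
          - ((nZ : ℂ)) * ((d₁' : ℂ) + (d₂' : ℂ) * I)) ∈ Zi := by
      have hnZi : ((nZ : ℂ)) ∈ Zi := by simpa using int_mem_Zi nZ 0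
      have hPZi : (((p₁ * q₂ : ℤ)) : ℂ) ∈ Zi := by simpa using int_mem_Zi (p₁ * q₂) 0
      have hLZi : (((q₁ * q₂ : ℤ)) : ℂ) ∈ Zi := by simpa using int_mem_Zi (q₁ * q₂) 0
      exact add_mem (Zi_mul (sub_mem (int_mem_Zi m₁ m₂) hnZi) hPZi)
        (Zi_mul hLZi (sub_mem (Zi_mul (int_mem_Zi m₁ m₂) (int_mem_Zi g₁ g₂))
          (Zi_mul hnZi (int_mem_Zi d₁' d₂'))))
    obtain ⟨e₁, e₂, hE⟩ := mem_Zi.1 hC₀Zi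
    have hsepin : (b : ℂ) * ((((m₁ - nZ) * (p₂ * q₁) - m₂ * (q₁ * q₂) : ℤ) : ℂ)
        + ((m₂ * (p₂ * q₁) + (m₁ + nZ) * (q₁ * q₂) : ℤ) : ℂ) * I)
        + (((e₁ : ℤ) : ℂ) + ((e₂ : ℤ) : ℂ) * I) = 0 := by
      rw [← hE]
      push_cast [hxdef, hcx]
      push_cast [hxdef, hcx, map_add, map_mul, Complex.conj_ofReal, Complex.conj_I] at hC
      linear_combination ((q₁ : ℂ) * q₂) * hC - ((m₁ : ℂ) + m₂ * I - n) * haC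
        - ((b : ℂ) * m₂ * (q₁ * q₂)) * Complex.I_sq
    obtain ⟨hA₁, hA₂⟩ := sepC hb _ _ _ _ hsepin
    -- solve for m₁, m₂
    have hq₁sq : (q₁ ^ 2 : ℤ) ≠ 0 := by positivity
    have hm₁N : m₁ * (p₂ ^ 2 + q₂ ^ 2) = nZ * (p₂ ^ 2 - q₂ ^ 2) := by
      have h1 : q₁ ^ 2 * (m₁ * (p₂ ^ 2 + q₂ ^ 2) - nZ * (p₂ ^ 2 - q₂ ^ 2)) = 0 := by
        linear_combination (p₂ * q₁) * hA₁ + (q₁ * q₂) * hA₂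
      rcases mul_eq_zero.mp h1 with h | h
      · exact absurd h hq₁sq
      · linarith
    have hm₂N : m₂ * (p₂ ^ 2 + q₂ ^ 2) = -(2 * nZ * p₂ * q₂) := by
      have h1 : q₁ ^ 2 * (m₂ * (p₂ ^ 2 + q₂ ^ 2) + 2 * nZ * p₂ * q₂) = 0 := by
        linear_combination (p₂ * q₁) * hA₂ - (q₁ * q₂) * hA₁
      rcases mul_eq_zero.mp h1 with h | h
      · exact absurd h hq₁sq
      · linarith
    -- conclude u0 = z / wc
    have hNC0 : ((p₂ ^ 2 + q₂ ^ 2 : ℤ) : ℂ) ≠ 0 := by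
      rw [Int.cast_ne_zero]
      exact hNpos.ne'
    have hm₁NC : (m₁ : ℂ) * ((p₂ : ℂ) ^ 2 + (q₂ : ℂ) ^ 2) = (nZ : ℂ) * ((p₂ : ℂ) ^ 2 - (q₂ : ℂ) ^ 2) := by
      exact_mod_cast congrArg (fun r : ℤ => (r : ℂ)) hm₁N
    have hm₂NC : (m₂ : ℂ) * ((p₂ : ℂ) ^ 2 + (q₂ : ℂ) ^ 2) = -(2 * (nZ : ℂ) * p₂ * q₂) := by
      exact_mod_cast congrArg (fun r : ℤ => (r : ℂ)) hm₂N
    have hμzN : ((m₁ : ℂ) + (m₂ : ℂ) * I) * z * ((p₂ ^ 2 + q₂ ^ 2 : ℤ) : ℂ)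
        = (nZ : ℂ) * wc * ((p₂ ^ 2 + q₂ ^ 2 : ℤ) : ℂ) := by
      rw [hzdef, hwcdef]
      push_cast
      linear_combination ((p₂ : ℂ) + q₂ * I) * hm₁NC + (((p₂ : ℂ) + q₂ * I) * I) * hm₂NC
        + (-(nZ : ℂ) * q₂ ^ 2 * ((p₂ : ℂ) - q₂ * I) + (-(nZ : ℂ) * p₂ * q₂ ^ 2 - (nZ : ℂ) * q₂ ^ 3 * I)) * Complex.I_sq
    have hμz : ((m₁ : ℂ) + (m₂ : ℂ) * I) * z = (nZ : ℂ) * wc :=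
      mul_right_cancel₀ hNC0 hμzN
    have hnnZ : ((nZ : ℂ)) = ((n : ℕ) : ℂ) := by push_cast [hnZdef]; ring
    have hu0wc : (u0 : ℂ) * wc = z := by
      have h1 : ((n : ℕ) : ℂ) * z = (u0 : ℂ) * ((nZ : ℂ) * wc) := by
        rw [← hμz, heqn]; ring
      rw [hnnZ] at h1
      have h2 : ((n : ℕ) : ℂ) * (z - (u0 : ℂ) * wc) = 0 := by linear_combination h1
      rcases mul_eq_zero.mp h2 with h | h
      · exact absurd h hnC0
      · linear_combination -h
    have hu0eq : (u0 : ℂ) = z / wc := by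
      rw [eq_div_iff hwc0]
      exact hu0wc
    constructor
    · funext w
      rw [← hR, hrefl]
      simp only [LinearIsometryEquiv.trans_apply, conjLIE_apply, rotation_apply]
      rw [hu0eq]
    -- divisibility
    · have hmain2 : wc * (x + ((g₁ : ℂ) + (g₂ : ℂ) * I)) = z * (conj x + ((d₁' : ℂ) + (d₂' : ℂ) * I)) := by
        have h1 : x + (c - x) = c := by ring
        rw [← hg, h1, hceq, ← hu0wc]
        ring
      have hC₁Zi : z * ((d₁' : ℂ) + (d₂' : ℂ) * I) - wc * ((g₁ : ℂ) + (g₂ : ℂ) * I) ∈ Zi := by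
        have hzZi : z ∈ Zi := by rw [hzdef]; exact int_mem_Zi p₂ q₂
        have hwcZi : wc ∈ Zi := by
          have := int_mem_Zi p₂ (-q₂)
          push_cast at this
          rw [hwcdef]
          convert this using 1
          ring
        exact sub_mem (Zi_mul hzZi (int_mem_Zi d₁' d₂')) (Zi_mul hwcZi (int_mem_Zi g₁ g₂))
      obtain ⟨e₁', e₂', hE'⟩ := mem_Zi.1 hC₁Zi
      have hq : ((q₁ : ℂ) * q₂) * ((e₁' : ℂ) + (e₂' : ℂ) * I) = ((-2 * p₁ * q₂ ^ 2 : ℤ) : ℂ) * I := by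
        rw [← hE']
        push_cast [hzdef, hwcdef, hxdef, hcx]
        push_cast [hzdef, hwcdef, hxdef, hcx, map_add, map_mul, Complex.conj_ofReal, Complex.conj_I] at hmain2
        linear_combination (-(q₁ : ℂ) * q₂) * hmain2 + (-2 * (q₂ : ℂ) * I) * haC
      have him := congrArg Complex.im hq
      simp at him
      have hZeq : q₁ * q₂ * e₂' = -(2 * p₁ * q₂ ^ 2) := by
          rw [← Int.cast_pow, Complex.intCast_re] at him
          exact_mod_cast (by push_cast at him ⊢; linear_combination him :
            ((q₁ * q₂ * e₂' : ℤ) : ℝ) = ((-(2 * p₁ * q₂ ^ 2) : ℤ) : ℝ))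
      have hq₂ne : q₂ ≠ 0 := hq₂.ne'
      have hq₁e : q₁ * e₂' = -(2 * p₁ * q₂) := by
        have h1 : q₂ * (q₁ * e₂' + 2 * p₁ * q₂) = 0 := by linear_combination hZeq
        rcases mul_eq_zero.mp h1 with h | h
        · exact absurd h hq₂ne
        · linear_combination h
      have hdvd1 : q₁ ∣ p₁ * (2 * q₂) := ⟨-e₂', by linear_combination hq₁e⟩
      exact (IsCoprime.dvd_of_dvd_mul_left
        ((Int.isCoprime_iff_gcd_eq_one.mpr hcop₁).symm) hdvd1)

theorem OC_of_rationally_dependent_even (a b : ℝ) (ha : Irrational a) (hb : Irrational b)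
    (p₁ p₂ q₁ q₂ : ℤ) (hq₁ : 0 < q₁) (hq₂ : 0 < q₂)
    (hcop₁ : Int.gcd p₁ q₁ = 1) (hcop₂ : Int.gcd p₂ q₂ = 1)
    (heven : Even (p₂ * q₂))
    (hab : a = (p₁ : ℝ) / (q₁ : ℝ) + ((p₂ : ℝ) / (q₂ : ℝ)) * b) :
    (q₁ ∣ 2 * q₂ →
        OCs (a + b * I) =
          ({id, fun w => (((p₂ : ℂ) + (q₂ : ℂ) * I) / ((p₂ : ℂ) - (q₂ : ℂ) * I)) * conj w} :
            Set (ℂ → ℂ))) ∧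
      (¬ q₁ ∣ 2 * q₂ → OCs (a + b * I) = ({id} : Set (ℂ → ℂ))) := by
  constructor
  · intro hdvd
    ext f
    simp only [Set.mem_insert_iff, Set.mem_singleton_iff]
    constructor
    · intro hf
      rcases OCs_sub a b hb p₁ p₂ q₁ q₂ hq₁ hq₂ hcop₁ hab f hf with h | ⟨h, _⟩
      · exact Or.inl h
      · exact Or.inr h
    · rintro (rfl | rfl)
      · exact id_mem_OCs _
      · exact refl_mem_OCs a b hb p₁ p₂ q₁ q₂ hq₁ hq₂ hcop₂ heven hab hdvd
  · intro hndvd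
    ext f
    simp only [Set.mem_singleton_iff]
    constructor
    · intro hf
      rcases OCs_sub a b hb p₁ p₂ q₁ q₂ hq₁ hq₂ hcop₁ hab f hf with h | ⟨_, hd⟩
      · exact h
      · exact absurd hd hndvd
    · rintro rfl
      exact id_mem_OCs _
end

section
/- Let x ∈ ℂ and let Q be a surjective real-linear isometry of ℂ with Q(ℤ[i]) = ℤ[i] (i.e., Q belongs to the point group of Γ). Then OC(Qx + Γ) = Q ∘ OC(x+Γ) ∘ Q⁻¹; that is, a surjective real-linear isometry R of ℂ belongs to OC(Qx + Γ) if and only if Q⁻¹ ∘ R ∘ Q belongs to OC(x+Γ). -/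
open Pointwise Complex ComplexConjugate

lemma image_vadd_set_lin (Q : ℂ ≃ₗᵢ[ℝ] ℂ) (a : ℂ) (S : Set ℂ) :
    ⇑Q '' (a +ᵥ S) = Q a +ᵥ (⇑Q '' S) := by
  ext z
  simp only [Set.mem_image, Set.mem_vadd_set, vadd_eq_add]
  constructor
  · rintro ⟨w, ⟨s, hs, rfl⟩, rfl⟩
    exact ⟨Q s, ⟨s, hs, rfl⟩, (map_add Q a s).symm⟩
  · rintro ⟨w, ⟨s, hs, rfl⟩, rfl⟩
    exact ⟨a + s, ⟨s, hs, rfl⟩, map_add Q a s⟩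

lemma image_shiftedZi (Q : ℂ ≃ₗᵢ[ℝ] ℂ) (hQ : ⇑Q '' (Zi : Set ℂ) = (Zi : Set ℂ)) (y : ℂ) :
    ⇑Q '' shiftedZi y = shiftedZi (Q y) := by
  rw [shiftedZi, image_vadd_set_lin, hQ, shiftedZi]

lemma key_conj (Q : ℂ ≃ₗᵢ[ℝ] ℂ) (hQ : ⇑Q '' (Zi : Set ℂ) = (Zi : Set ℂ)) (y : ℂ)
    (f : ℂ → ℂ) (hf : f ∈ OCs y) : (⇑Q ∘ f ∘ ⇑Q.symm) ∈ OCs (Q y) := by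
  have hQsymm : ⇑Q.symm '' (Zi : Set ℂ) = (Zi : Set ℂ) := by
    conv_lhs => rw [← hQ]
    rw [Set.image_image]; simp
  obtain ⟨⟨R, hR⟩, c, hc, Λ, hΛ, hidx, hset⟩ := hf
  set e : ℂ →+ ℂ := (Q.toAddEquiv : ℂ →+ ℂ) with he
  have hecoe : ⇑e = ⇑Q := rfl
  have heinj : Function.Injective ⇑e := by rw [hecoe]; exact Q.injective
  have mapZi : AddSubgroup.map e Zi = Zi := by
    apply SetLike.ext'
    rw [AddSubgroup.coe_map, hecoe, hQ]
  refine ⟨⟨(Q.symm.trans R).trans Q, by funext w; simp [hR]⟩,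
    Q c, ?_, AddSubgroup.map e Λ, ?_, ?_, ?_⟩
  · rw [← image_shiftedZi Q hQ]; exact ⟨c, hc, rfl⟩
  · rw [← mapZi]; exact AddSubgroup.map_mono hΛ
  · have h1 := AddSubgroup.relIndex_comap (AddSubgroup.map e Λ) e Zi
    rw [AddSubgroup.comap_map_eq_self_of_injective heinj, mapZi] at h1
    rw [← h1]; exact hidx
  · have h2 : ⇑Q.symm '' shiftedZi (Q y) = shiftedZi y := by
      rw [image_shiftedZi Q.symm hQsymm, LinearIsometryEquiv.symm_apply_apply]
    have himg : (⇑Q ∘ f ∘ ⇑Q.symm) '' shiftedZi (Q y) = ⇑Q '' (f '' shiftedZi y) := by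
      rw [Set.image_comp, Set.image_comp, h2]
    rw [himg, ← image_shiftedZi Q hQ, ← Set.image_inter Q.injective, hset,
      image_vadd_set_lin, AddSubgroup.coe_map, hecoe]

theorem OC_point_group_conjugation (x : ℂ) (Q : ℂ ≃ₗᵢ[ℝ] ℂ)
    (hQ : ⇑Q '' (Zi : Set ℂ) = (Zi : Set ℂ)) :
    OCs (Q x) = (fun f => ⇑Q ∘ f ∘ ⇑Q.symm) '' OCs x ∧
      ∀ R : ℂ ≃ₗᵢ[ℝ] ℂ, ⇑R ∈ OCs (Q x) ↔ (⇑Q.symm ∘ ⇑R ∘ ⇑Q) ∈ OCs x := by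
  have hQsymm : ⇑Q.symm '' (Zi : Set ℂ) = (Zi : Set ℂ) := by
    conv_lhs => rw [← hQ]
    rw [Set.image_image]; simp
  have back : ∀ f : ℂ → ℂ, f ∈ OCs (Q x) → (⇑Q.symm ∘ f ∘ ⇑Q) ∈ OCs x := by
    intro f hf
    have := key_conj Q.symm hQsymm (Q x) f hf
    rw [LinearIsometryEquiv.symm_symm, LinearIsometryEquiv.symm_apply_apply] at this
    exact this
  constructor
  · ext f
    constructor
    · intro hf
      refine ⟨⇑Q.symm ∘ f ∘ ⇑Q, back f hf, ?_⟩
      funext w; simp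
    · rintro ⟨g, hg, rfl⟩
      exact key_conj Q hQ x g hg
  · intro R
    constructor
    · exact back ⇑R
    · intro h
      have := key_conj Q hQ x _ h
      have heq : (⇑Q ∘ (⇑Q.symm ∘ ⇑R ∘ ⇑Q) ∘ ⇑Q.symm) = ⇑R := by funext w; simp
      rwa [heq] at this
end

section
/- Let x = 2/5 + (1/5)·i. For every z ∈ ℤ[i] with z and conj(z) coprime in ℤ[i] and every ε ∈ {1, −1, i, −i}, the reflection w ↦ ε·(z/conj(z))·conj(w) belongs to OC(x+Γ) if and only if 1 − 2i divides z in ℤ[i]. Moreover, OC(x+Γ) is not closed under composition: there exist T₁, T₂ ∈ OC(x+Γ) with T₁ ∘ T₂ ∉ OC(x+Γ), so OC(x+Γ) is not a subgroup of OC(Γ). -/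
open Pointwise Complex ComplexConjugate

section OCaux
open GaussianInt

lemma mem_Zi_s19 {w : ℂ} : w ∈ Zi ↔ ∃ g : GaussianInt, (g : ℂ) = w := Iff.rfl

lemma mem_shifted {x w : ℂ} : w ∈ shiftedZi x ↔ ∃ g : GaussianInt, w = x + (g : ℂ) := by
  constructor
  · rintro ⟨y, ⟨g, rfl⟩, rfl⟩; exact ⟨g, rfl⟩
  · rintro ⟨g, rfl⟩; exact ⟨(g:ℂ), ⟨g, rfl⟩, rfl⟩

lemma h5X : (5:ℂ) * (2 / 5 + (1 / 5) * I) = ((⟨2,1⟩ : GaussianInt) : ℂ) := by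
  rw [toComplex_def']; push_cast; ring

lemma h5cX : (5:ℂ) * conj (2 / 5 + (1 / 5) * I) = ((⟨2,-1⟩ : GaussianInt) : ℂ) := by
  rw [toComplex_def']; simp only [map_add, map_mul, map_div₀, conj_I, map_ofNat, map_one]
  push_cast; ring

noncomputable def zLat (z : GaussianInt) : AddSubgroup ℂ :=
  AddMonoidHom.range (GaussianInt.toComplex.toAddMonoidHom.comp (AddMonoidHom.mulLeft z))

lemma mem_zLat {z : GaussianInt} {w : ℂ} : w ∈ zLat z ↔ ∃ k : GaussianInt, ((z * k : GaussianInt) : ℂ) = w :=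
  Iff.rfl

lemma zLat_le : ∀ z : GaussianInt, zLat z ≤ Zi := by
  rintro z w ⟨k, rfl⟩; exact ⟨z * k, rfl⟩

lemma zLat_relindex_ne (z : GaussianInt) (hz : z ≠ 0) : (zLat z).relIndex Zi ≠ 0 := by
  set n : ℕ := z.norm.toNat with hn
  have hnz : (n : ℤ) = z.norm := Int.toNat_of_nonneg (le_of_lt (GaussianInt.norm_pos.2 hz))
  have hnpos : 0 < (n:ℤ) := by rw [hnz]; exact GaussianInt.norm_pos.2 hz
  -- key: multiples of n are in zLat z
  have hkey : ∀ a b : ℤ, (((⟨(n:ℤ) * a, (n:ℤ) * b⟩ : GaussianInt)) : ℂ) ∈ zLat z := by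
    intro a b
    refine ⟨star z * ⟨a, b⟩, ?_⟩
    show ((z * (star z * ⟨a, b⟩) : GaussianInt) : ℂ) = _
    apply GaussianInt.toComplex_inj.mpr
    rw [← mul_assoc, ← Zsqrtd.norm_eq_mul_conj, ← hnz]
    ext <;> simp [Zsqrtd.ext_iff, Zsqrtd.re_mul, Zsqrtd.im_mul]
  have hsurj : Function.Surjective (fun p : Fin n × Fin n =>
      (QuotientAddGroup.mk ⟨((⟨(p.1 : ℤ), (p.2 : ℤ)⟩ : GaussianInt) : ℂ), ⟨_, rfl⟩⟩ :
        Zi ⧸ (zLat z).addSubgroupOf Zi)) := by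
    intro q
    obtain ⟨⟨w, hw⟩, rfl⟩ := QuotientAddGroup.mk_surjective q
    obtain ⟨g, rfl⟩ := hw
    have hre : (g.re % (n:ℤ)).toNat < n := by
      have h1 := Int.emod_nonneg g.re (ne_of_gt hnpos)
      have h2 := Int.emod_lt_of_pos g.re hnpos
      omega
    have him : (g.im % (n:ℤ)).toNat < n := by
      have h1 := Int.emod_nonneg g.im (ne_of_gt hnpos)
      have h2 := Int.emod_lt_of_pos g.im hnpos
      omega
    refine ⟨(⟨(g.re % (n:ℤ)).toNat, hre⟩, ⟨(g.im % (n:ℤ)).toNat, him⟩), ?_⟩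
    rw [QuotientAddGroup.eq]
    rw [AddSubgroup.mem_addSubgroupOf]
    have h1 : ((g.re % (n:ℤ)).toNat : ℤ) = g.re % (n:ℤ) :=
      Int.toNat_of_nonneg (Int.emod_nonneg g.re (ne_of_gt hnpos))
    have h2 : ((g.im % (n:ℤ)).toNat : ℤ) = g.im % (n:ℤ) :=
      Int.toNat_of_nonneg (Int.emod_nonneg g.im (ne_of_gt hnpos))
    refine Set.mem_of_eq_of_mem ?_ (hkey (g.re / (n:ℤ)) (g.im / (n:ℤ)))
    show -((⟨((g.re % (n:ℤ)).toNat : ℤ), ((g.im % (n:ℤ)).toNat : ℤ)⟩ : GaussianInt) : ℂ) + (g : ℂ) = _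
    rw [← GaussianInt.toComplex_neg, ← GaussianInt.toComplex_add]
    apply GaussianInt.toComplex_inj.mpr
    ext <;> simp [Zsqrtd.ext_iff, h1, h2] <;>
      [linarith [Int.emod_add_mul_ediv g.re (n:ℤ)]; linarith [Int.emod_add_mul_ediv g.im (n:ℤ)]]
  have : Finite (Zi ⧸ (zLat z).addSubgroupOf Zi) := by
    have : n ≠ 0 := by omega
    exact Finite.of_surjective _ hsurj
  exact AddSubgroup.index_ne_zero_of_finite

lemma refl_mem_iff (z : GaussianInt) (hz : IsCoprime z (star z)) (ε : ℂ)
    (hε : ε ∈ ({1, -1, I, -I} : Set ℂ)) :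
    ((fun w => ε * ((z : ℂ) / conj (z : ℂ)) * conj w) ∈ OCs (2 / 5 + (1 / 5) * I)) ↔
      (⟨1, -2⟩ : GaussianInt) ∣ z := by
  -- notation
  set X : ℂ := 2 / 5 + (1 / 5) * I with hX
  -- ε is the image of a Gaussian unit
  obtain ⟨⟨e, e', hee', heε⟩, hnε⟩ :
      (∃ e e' : GaussianInt, e * e' = 1 ∧ (e : ℂ) = ε) ∧ ‖ε‖ = 1 := by
    simp only [Set.mem_insert_iff, Set.mem_singleton_iff] at hε
    rcases hε with rfl | rfl | rfl | rfl
    · exact ⟨⟨1, 1, by decide, by simp⟩, by simp⟩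
    · exact ⟨⟨-1, -1, by decide, by simp⟩, by simp⟩
    · exact ⟨⟨⟨0,1⟩, ⟨0,-1⟩, by decide, by rw [toComplex_def']; push_cast; ring⟩, by simp⟩
    · exact ⟨⟨⟨0,-1⟩, ⟨0,1⟩, by decide, by rw [toComplex_def']; push_cast; ring⟩, by simp⟩
  subst heε
  -- basic non-vanishing
  have hz0 : z ≠ 0 := by
    rintro rfl
    simp only [star_zero] at hz
    exact not_isUnit_zero (isCoprime_zero_left.mp hz)
  have hzc0 : (z : ℂ) ≠ 0 := by rwa [Ne, toComplex_eq_zero]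
  have hczc0 : conj (z : ℂ) ≠ 0 := by simpa using hzc0
  set u : ℂ := (e : ℂ) * ((z : ℂ) / conj (z : ℂ)) with hu
  have hcu : conj (z : ℂ) * u = (e : ℂ) * (z : ℂ) := by
    rw [hu]; field_simp
  have hstarzc : ((star z : GaussianInt) : ℂ) = conj (z : ℂ) := toComplex_star z
  -- image characterization
  have himg : ∀ w : ℂ, w ∈ (fun w => (e:ℂ) * ((z : ℂ) / conj (z : ℂ)) * conj w) '' shiftedZi X ↔
      ∃ g : GaussianInt, w = u * (conj X + (g : ℂ)) := by
    intro w
    constructor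
    · rintro ⟨v, hv, rfl⟩
      obtain ⟨s, rfl⟩ := mem_shifted.mp hv
      refine ⟨star s, ?_⟩
      show u * conj (X + (s : ℂ)) = _
      rw [map_add, toComplex_star]
    · rintro ⟨g, rfl⟩
      refine ⟨X + ((star g : GaussianInt) : ℂ), mem_shifted.mpr ⟨star g, rfl⟩, ?_⟩
      show u * conj (X + ((star g : GaussianInt) : ℂ)) = _
      rw [map_add, toComplex_star, conj_conj]
  constructor
  · rintro ⟨-, c, -, Λ, -, -, hS⟩
    have hcmem : c ∈ shiftedZi X ∩ ((fun w => (e:ℂ) * ((z : ℂ) / conj (z : ℂ)) * conj w) '' shiftedZi X) := by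
      rw [hS]; exact ⟨0, Λ.zero_mem, add_zero c⟩
    obtain ⟨t₁, heq₁⟩ := mem_shifted.mp hcmem.1
    obtain ⟨t₂, heq₂⟩ := (himg c).mp hcmem.2
    -- pass to Gaussian integers
    have key : star z * (⟨2,1⟩ + 5 * t₁) = e * (z * (⟨2,-1⟩ + 5 * t₂)) := by
      apply toComplex_inj.mp
      have e1 : (5:ℂ) * conj (z:ℂ) * c = conj (z : ℂ) *
          (((⟨2,1⟩ : GaussianInt) : ℂ) + 5 * (t₁ : ℂ)) := by
        rw [heq₁]; linear_combination conj (z:ℂ) * h5X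
      have e2 : (5:ℂ) * conj (z:ℂ) * c = (e : ℂ) * ((z : ℂ) *
          (((⟨2,-1⟩ : GaussianInt) : ℂ) + 5 * (t₂ : ℂ))) := by
        rw [heq₂]
        linear_combination (5 * (conj X + (t₂:ℂ))) * hcu + (e:ℂ) * (z:ℂ) * h5cX
      push_cast [toComplex_mul, toComplex_add, map_ofNat]
      rw [hstarzc]
      linear_combination e2 - e1
    -- divisibility extraction
    have hA5 : (5 : GaussianInt) = ⟨2,1⟩ * ⟨2,-1⟩ := by decide
    have hd1 : (⟨2,1⟩ : GaussianInt) ∣ e * (z * (⟨2,-1⟩ + 5 * t₂)) := by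
      rw [← key]
      exact ⟨star z * (1 + ⟨2,-1⟩ * t₁), by linear_combination (star z * t₁) * hA5⟩
    obtain ⟨k, hk⟩ := hd1
    have hd2 : (⟨2,1⟩ : GaussianInt) ∣ z * (⟨2,-1⟩ + 5 * t₂) :=
      ⟨e' * k, by linear_combination e' * hk - (z * (⟨2,-1⟩ + 5 * t₂)) * hee'⟩
    obtain ⟨k', hk'⟩ := hd2
    have hd3 : (⟨2,1⟩ : GaussianInt) ∣ z * ⟨2,-1⟩ :=
      ⟨k' - ⟨2,-1⟩ * (z * t₂), by linear_combination hk' - (z * t₂) * hA5⟩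
    have hcoA : IsCoprime (⟨2,1⟩ : GaussianInt) (⟨2,-1⟩ : GaussianInt) :=
      ⟨⟨2,1⟩, ⟨0,-2⟩, by decide⟩
    have hAz : (⟨2,1⟩ : GaussianInt) ∣ z := hcoA.dvd_of_dvd_mul_right hd3
    obtain ⟨m, hm⟩ := hAz
    have hBA : (⟨2,1⟩ : GaussianInt) = ⟨1,-2⟩ * ⟨0,1⟩ := by decide
    exact ⟨⟨0,1⟩ * m, by rw [hm]; linear_combination m * hBA⟩
  · -- reverse direction
    rintro ⟨k0, hk0⟩
    have hBA' : (⟨1,-2⟩ : GaussianInt) = ⟨2,1⟩ * ⟨0,-1⟩ := by decide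
    have hAz : (⟨2,1⟩ : GaussianInt) ∣ z :=
      ⟨⟨0,-1⟩ * k0, by rw [hk0]; linear_combination k0 * hBA'⟩
    have hA'z : (⟨2,-1⟩ : GaussianInt) ∣ star z := by
      obtain ⟨m, hm⟩ := hAz
      exact ⟨star m, by rw [hm, star_mul']; congr 1⟩
    have hA5 : (5 : GaussianInt) = ⟨2,1⟩ * ⟨2,-1⟩ := by decide
    have hcoA : IsCoprime (⟨2,1⟩ : GaussianInt) (⟨2,-1⟩ : GaussianInt) :=
      ⟨⟨2,1⟩, ⟨0,-2⟩, by decide⟩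
    -- 5 divides the obstruction
    have hobs : (5 : GaussianInt) ∣ star z * ⟨2,1⟩ - e * z * ⟨2,-1⟩ := by
      rw [hA5]
      refine IsCoprime.mul_dvd hcoA ?_ ?_
      · obtain ⟨m, hm⟩ := hAz
        exact ⟨star z - e * m * ⟨2,-1⟩, by rw [hm]; ring⟩
      · obtain ⟨m', hm'⟩ := hA'z
        exact ⟨m' * ⟨2,1⟩ - e * z, by rw [hm']; ring⟩
    obtain ⟨h, hh⟩ := hobs
    obtain ⟨p, q, hpq⟩ := id hz
    set g₁ : GaussianInt := -(h * q) with hg₁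
    set g₂ : GaussianInt := e' * (h * p) with hg₂
    set c : ℂ := X + (g₁ : ℂ) with hc
    -- the central identity:  c = u * (conj X + g₂)
    have hkeyZ : star z * (⟨2,1⟩ + 5 * g₁) = e * (z * (⟨2,-1⟩ + 5 * g₂)) := by
      have h1 : e * e' = 1 := hee'
      linear_combination hh - (5 * h) * hpq - (5 * (z * (h * p))) * h1
    have hkeyC : ((star z * (⟨2,1⟩ + 5 * g₁) : GaussianInt) : ℂ)
        = ((e * (z * (⟨2,-1⟩ + 5 * g₂)) : GaussianInt) : ℂ) := by rw [hkeyZ]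
    have hcimg : c = u * (conj X + (g₂ : ℂ)) := by
      have h5z : (5 : ℂ) * conj (z:ℂ) ≠ 0 := by
        simp [hczc0]
      apply mul_left_cancel₀ h5z
      push_cast [toComplex_mul, toComplex_add, map_ofNat] at hkeyC
      rw [hstarzc] at hkeyC
      rw [hc]
      linear_combination hkeyC + conj (z:ℂ) * h5X - (5 * (conj X + (g₂:ℂ))) * hcu
        - (e:ℂ) * (z:ℂ) * h5cX
    -- the lattice identity:  u maps e' * star z * k to z * k
    have hzu : ∀ k : GaussianInt, u * ((e' * (star z * k) : GaussianInt) : ℂ)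
        = ((z * k : GaussianInt) : ℂ) := by
      intro k
      push_cast [toComplex_mul]
      rw [hstarzc, hu]
      have h1 : ((e : GaussianInt) : ℂ) * ((e' : GaussianInt) : ℂ) = 1 := by
        rw [← toComplex_mul, hee', toComplex_one]
      field_simp
      linear_combination (k:ℂ) * h1
    refine ⟨?_, c, mem_shifted.mpr ⟨g₁, hc⟩, zLat z, zLat_le z, zLat_relindex_ne z hz0, ?_⟩
    · -- linear isometry
      refine ⟨Complex.conjLIE.trans (rotation ⟨u, ?_⟩), ?_⟩
      · show u ∈ Metric.sphere (0:ℂ) 1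
        rw [mem_sphere_zero_iff_norm, hu]
        rw [norm_mul, norm_div, RCLike.norm_conj, div_self (by simpa using hzc0), mul_one, hnε]
      · funext w
        simp [LinearIsometryEquiv.trans_apply, rotation_apply, hu]
        rfl
    · -- the set equality
      ext w
      constructor
      · rintro ⟨hw1, hw2⟩
        obtain ⟨t₁, rfl⟩ := mem_shifted.mp hw1
        obtain ⟨t₂, heq⟩ := (himg _).mp hw2
        have hd : (t₁ : ℂ) - (g₁ : ℂ) = u * ((t₂ : ℂ) - (g₂ : ℂ)) := by
          linear_combination heq - hcimg + hc
        have hdvd : z ∣ t₁ - g₁ := by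
          have : star z * (t₁ - g₁) = e * (z * (t₂ - g₂)) := by
            apply toComplex_inj.mp
            push_cast [toComplex_mul, toComplex_sub]
            rw [hstarzc]
            linear_combination conj (z:ℂ) * hd + ((t₂:ℂ) - (g₂:ℂ)) * hcu
          have hz' : z ∣ star z * (t₁ - g₁) := ⟨e * (t₂ - g₂), by rw [this]; ring⟩
          exact hz.dvd_of_dvd_mul_left hz'
        obtain ⟨k, hk⟩ := hdvd
        refine ⟨((z * k : GaussianInt) : ℂ), mem_zLat.mpr ⟨k, rfl⟩, ?_⟩
        show c + _ = _
        rw [← hk, hc]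
        push_cast [toComplex_sub]
        ring
      · rintro ⟨y, hy, rfl⟩
        obtain ⟨k, rfl⟩ := mem_zLat.mp hy
        constructor
        · refine mem_shifted.mpr ⟨g₁ + z * k, ?_⟩
          show c + _ = _
          rw [hc]
          push_cast [toComplex_add]
          ring
        · refine (himg _).mpr ⟨g₂ + e' * (star z * k), ?_⟩
          show c + _ = _
          rw [hcimg]
          push_cast [toComplex_add]
          rw [mul_add, ← hzu k]
          push_cast [toComplex_mul]
          ring

lemma comp_eq_neg :
    ((fun w => (1:ℂ) * (((⟨1,-2⟩ : GaussianInt) : ℂ) / conj ((⟨1,-2⟩ : GaussianInt) : ℂ)) * conj w) ∘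
     (fun w => (1:ℂ) * (((⟨2,1⟩ : GaussianInt) : ℂ) / conj ((⟨2,1⟩ : GaussianInt) : ℂ)) * conj w))
      = fun w : ℂ => -w := by
  have hz1 : ((⟨1,-2⟩ : GaussianInt) : ℂ) = 1 - 2*I := by rw [toComplex_def']; push_cast; ring
  have hz2 : ((⟨2,1⟩ : GaussianInt) : ℂ) = 2 + I := by rw [toComplex_def']; push_cast; ring
  funext w
  show (1:ℂ) * (_ / conj _) * conj ((1:ℂ) * (_ / conj _) * conj w) = -w
  rw [hz1, hz2]
  have d1 : (1:ℂ) + 2*I ≠ 0 := by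
    intro h; have := congrArg Complex.im h; simp at this
  have d2 : (2:ℂ) + I ≠ 0 := by
    intro h; have := congrArg Complex.im h; simp at this
  have hc1 : conj ((1:ℂ) - 2*I) = 1 + 2*I := by
    simp [map_sub, map_mul, Complex.conj_I, map_ofNat]
  have hc2 : conj ((2:ℂ) + I) = 2 - I := by
    simp [map_add, Complex.conj_I, map_ofNat]; ring
  have hc2' : conj ((2:ℂ) - I) = 2 + I := by
    simp [map_sub, Complex.conj_I, map_ofNat]
  rw [hc1, hc2, one_mul, one_mul, map_mul, map_div₀, conj_conj, hc2, hc2']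
  field_simp
  linear_combination (4*w) * Complex.I_sq

lemma neg_not_mem : (fun w : ℂ => -w) ∉ OCs (2 / 5 + (1 / 5) * I) := by
  rintro ⟨-, c, -, Λ, -, -, hS⟩
  have hcmem : c ∈ shiftedZi (2 / 5 + (1 / 5) * I) ∩
      ((fun w : ℂ => -w) '' shiftedZi (2 / 5 + (1 / 5) * I)) := by
    rw [hS]; exact ⟨0, Λ.zero_mem, add_zero c⟩
  obtain ⟨t₁, heq₁⟩ := mem_shifted.mp hcmem.1
  obtain ⟨v, hv, hvc⟩ := hcmem.2
  obtain ⟨t₂, rfl⟩ := mem_shifted.mp hv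
  have key : ((⟨5,0⟩ * (-t₁ - t₂) : GaussianInt) : ℂ) = ((⟨4,2⟩ : GaussianInt) : ℂ) := by
    have h50 : ((⟨5,0⟩ : GaussianInt) : ℂ) = 5 := by rw [toComplex_def']; push_cast; ring
    have h42 : ((⟨4,2⟩ : GaussianInt) : ℂ) = 4 + 2*I := by rw [toComplex_def']; push_cast; ring
    push_cast [toComplex_mul, toComplex_sub, toComplex_neg, h50, h42]
    have : -(2 / 5 + (1 / 5) * I + (t₂:ℂ)) = c := hvc
    linear_combination 5 * heq₁ + 5 * this
  have keyZ : (⟨5,0⟩ * (-t₁ - t₂) : GaussianInt) = ⟨4,2⟩ := toComplex_inj.mp key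
  have hre : (⟨5,0⟩ * (-t₁ - t₂) : GaussianInt).re = 4 := by rw [keyZ]
  have him : (⟨5,0⟩ * (-t₁ - t₂) : GaussianInt).im = 2 := by rw [keyZ]
  simp [Zsqrtd.re_mul, Zsqrtd.im_mul] at hre him
  omega

end OCaux

theorem OC_of_two_fifths_plus_fifth_I :
    (∀ z : GaussianInt, IsCoprime z (star z) → ∀ ε ∈ ({1, -1, I, -I} : Set ℂ),
        ((fun w => ε * ((z : ℂ) / conj (z : ℂ)) * conj w) ∈ OCs (2 / 5 + (1 / 5) * I) ↔
          (⟨1, -2⟩ : GaussianInt) ∣ z)) ∧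
      (∃ T₁ ∈ OCs (2 / 5 + (1 / 5) * I), ∃ T₂ ∈ OCs (2 / 5 + (1 / 5) * I),
        T₁ ∘ T₂ ∉ OCs (2 / 5 + (1 / 5) * I)) ∧
      ¬(id ∈ OCs (2 / 5 + (1 / 5) * I) ∧
          (∀ f ∈ OCs (2 / 5 + (1 / 5) * I), ∀ g ∈ OCs (2 / 5 + (1 / 5) * I),
            f ∘ g ∈ OCs (2 / 5 + (1 / 5) * I)) ∧
          (∀ f ∈ OCs (2 / 5 + (1 / 5) * I), ∀ g : ℂ → ℂ, g ∘ f = id → f ∘ g = id →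
            g ∈ OCs (2 / 5 + (1 / 5) * I))) := by
  have cop1 : IsCoprime (⟨1,-2⟩ : GaussianInt) (star (⟨1,-2⟩ : GaussianInt)) :=
    ⟨⟨1,1⟩, ⟨0,1⟩, by decide⟩
  have cop2 : IsCoprime (⟨2,1⟩ : GaussianInt) (star (⟨2,1⟩ : GaussianInt)) :=
    ⟨⟨2,1⟩, ⟨0,-2⟩, by decide⟩
  have h1mem : (1:ℂ) ∈ ({1, -1, I, -I} : Set ℂ) := Set.mem_insert _ _
  have hT₁ : (fun w => (1:ℂ) * (((⟨1,-2⟩ : GaussianInt) : ℂ) /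
      conj ((⟨1,-2⟩ : GaussianInt) : ℂ)) * conj w) ∈ OCs (2 / 5 + (1 / 5) * I) :=
    (refl_mem_iff _ cop1 1 h1mem).mpr dvd_rfl
  have hT₂ : (fun w => (1:ℂ) * (((⟨2,1⟩ : GaussianInt) : ℂ) /
      conj ((⟨2,1⟩ : GaussianInt) : ℂ)) * conj w) ∈ OCs (2 / 5 + (1 / 5) * I) :=
    (refl_mem_iff _ cop2 1 h1mem).mpr ⟨⟨0,1⟩, by decide⟩
  refine ⟨fun z hz ε hε => refl_mem_iff z hz ε hε, ⟨_, hT₁, _, hT₂, ?_⟩, ?_⟩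
  · rw [comp_eq_neg]; exact neg_not_mem
  · rintro ⟨-, hcl, -⟩
    have h := hcl _ hT₁ _ hT₂
    rw [comp_eq_neg] at h
    exact neg_not_mem h
end
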